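/- Let μ = (t_1, …, t_b) be a partition of r+1 with t_1 ≥ ⋯ ≥ t_b > 0, with transpose μ^⊤ = (r_1, …, r_a), and let λ = (p_1, …, p_m) be a composition of r+1. If there exists an index l with 1 ≤ l ≤ m such that p_1 + ⋯ + p_l > t_1 + ⋯ + t_l (where t_i := 0 for i > b), then for every w ∈ [W(P_{μ^⊤})\W(G)] there exists α ∈ Δ_λ such that w(α) is a positive root. -/

import Mathlib

open Equiv Finset

/-- The simple reflection `s i = (i, i+1)` (1-based) in `S_{r+1}`, for `1 ≤ i ≤ r`;
the junk value `1` otherwise. -/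
def sr (r i : ℕ) : Equiv.Perm (Fin (r + 1)) :=
  if h : 1 ≤ i ∧ i ≤ r then Equiv.swap ⟨i - 1, by omega⟩ ⟨i, by omega⟩ else 1

/-- The cycle `π_k` with ambient index `i`, i.e. `s_i s_{i-1} ⋯ s_k`
(the identity when `k = i + 1`). -/
def cyc (r i k : ℕ) : Equiv.Perm (Fin (r + 1)) :=
  ((List.range (i + 1 - k)).map fun t => sr r (i - t)).prod

/-- The product `π_{k i} π_{k (i+1)} ⋯ π_{k j}`, the factor `π_{k t}` being the
cycle with ambient index `t`. -/
def cycProd (r : ℕ) (k : ℕ → ℕ) (i j : ℕ) : Equiv.Perm (Fin (r + 1)) :=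
  ((List.range' i (j + 1 - i)).map fun t => cyc r t (k t)).prod

/-- Coxeter length of a permutation: the number of inversions. -/
def lenInv {n : ℕ} (w : Equiv.Perm (Fin n)) : ℕ :=
  (Finset.univ.filter fun p : Fin n × Fin n => p.1 < p.2 ∧ w p.2 < w p.1).card

/-- Partial sums of a (1-based) composition: `psum c j = c 1 + ⋯ + c j`. -/
def psum (c : ℕ → ℕ) (j : ℕ) : ℕ := ∑ i ∈ Finset.Icc 1 j, c i

/-- The transpose partition of `(t 1, …, t b)`: `transp b t j = #{i ∈ [1,b] : t i ≥ j}`. -/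
def transp (b : ℕ) (t : ℕ → ℕ) (j : ℕ) : ℕ :=
  ((Finset.Icc 1 b).filter fun i => j ≤ t i).card

/-- The element of `Fin (r+1)` with value `i` (for `i ≤ r`). -/
def finOf (r i : ℕ) : Fin (r + 1) := ⟨min i r, by omega⟩

/-- `w(α_i)` is a positive root, where `α_i = e_i − e_{i+1}` (1-based), i.e. the
0-based pair `(i-1, i)`; `w(e_c − e_d) = e_{w c} − e_{w d}` is positive iff `w c < w d`. -/
def posRoot (r : ℕ) (w : Equiv.Perm (Fin (r + 1))) (i : ℕ) : Prop :=
  (w (finOf r (i - 1)) : ℕ) < w (finOf r i)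

/-- `w(α_i)` is a negative root. -/
def negRoot (r : ℕ) (w : Equiv.Perm (Fin (r + 1))) (i : ℕ) : Prop :=
  (w (finOf r i) : ℕ) < w (finOf r (i - 1))

/-- `w(α_i)` is a simple root. -/
def simpleRoot (r : ℕ) (w : Equiv.Perm (Fin (r + 1))) (i : ℕ) : Prop :=
  (w (finOf r i) : ℕ) = (w (finOf r (i - 1)) : ℕ) + 1

/-- `w(α_i) = α_j` (as roots: the image pair is `(j-1, j)` in 0-based indices). -/
def eqRoot (r : ℕ) (w : Equiv.Perm (Fin (r + 1))) (i j : ℕ) : Prop :=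
  (w (finOf r (i - 1)) : ℕ) = j - 1 ∧ (w (finOf r i) : ℕ) = j

/-- `Π_l Π_{l+1} ⋯ Π_a` for the composition `c` and tuple `k`, where
`Π_j = π_{k_{x_{j-1}}} ⋯ π_{k_{x_j - 1}}` and `x_j = psum c j`. -/
def tailProd (r a : ℕ) (c k : ℕ → ℕ) (l : ℕ) : Equiv.Perm (Fin (r + 1)) :=
  ((List.range' l (a + 1 - l)).map fun j => cycProd r k (psum c (j - 1)) (psum c j - 1)).prod

/-- The subgroup `W(P)`: generated by the simple reflections `s i` with `i ∈ [1,r]`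
avoiding the partial sums `x 1, …, x (a-1)` of the composition `c`. -/
def WP (r a : ℕ) (c : ℕ → ℕ) : Subgroup (Equiv.Perm (Fin (r + 1))) :=
  Subgroup.closure
    {g | ∃ i, 1 ≤ i ∧ i ≤ r ∧ (∀ j, 1 ≤ j → j ≤ a - 1 → i ≠ psum c j) ∧ g = sr r i}

/-- `α_i ∈ Δ_λ` for the composition `λ = (p 1, …, p m)` of `r+1`. -/
def inDelta (r m : ℕ) (p : ℕ → ℕ) (i : ℕ) : Prop :=
  1 ≤ i ∧ i ≤ r ∧ ∀ j, 1 ≤ j → j ≤ m - 1 → i ≠ psum p j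

/-- The left coset `H · g`. -/
def cosetOf {G : Type*} [Group G] (H : Subgroup G) (g : G) : Set G :=
  {x | ∃ h ∈ H, x = h * g}

/-- The (0-based) positions `u` and `v` lie in the same block of the composition
`μ^⊤ = transp b t`; a negative root `e_c − e_d` lies in `Φ⁻_{μ^⊤}` iff its two
indices lie in the same block. -/
def sameBlock (b : ℕ) (t : ℕ → ℕ) (u v : ℕ) : Prop :=
  ∃ j, 1 ≤ j ∧ j ≤ t 1 ∧
    psum (transp b t) (j - 1) ≤ u ∧ u < psum (transp b t) j ∧
    psum (transp b t) (j - 1) ≤ v ∧ v < psum (transp b t) j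

lemma psum_mono (c : ℕ → ℕ) {i j : ℕ} (h : i ≤ j) : psum c i ≤ psum c j :=
  Finset.sum_le_sum_of_subset (Finset.Icc_subset_Icc_right h)

lemma psum_zero (c : ℕ → ℕ) : psum c 0 = 0 := by simp [psum]

lemma psum_succ (c : ℕ → ℕ) {j : ℕ} (hj : 1 ≤ j) :
    psum c j = psum c (j - 1) + c j := by
  unfold psum
  have h : j = (j - 1) + 1 := by omega
  rw [h, Finset.sum_Icc_succ_top (by omega)]
  congr 2 <;> omega

lemma downClosed_eq_Icc {n : ℕ} (s : Finset ℕ) (hs : s ⊆ Finset.Icc 1 n)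
    (dc : ∀ i j, 1 ≤ i → i ≤ j → j ∈ s → i ∈ s) : s = Finset.Icc 1 s.card := by
  ext i
  simp only [Finset.mem_Icc]
  constructor
  · intro hi
    have h1 : 1 ≤ i := (Finset.mem_Icc.mp (hs hi)).1
    refine ⟨h1, ?_⟩
    have hsub : Finset.Icc 1 i ⊆ s := fun j hj => by
      have := Finset.mem_Icc.mp hj
      exact dc j i this.1 this.2 hi
    calc i = (Finset.Icc 1 i).card := by simp
    _ ≤ s.card := Finset.card_le_card hsub
  · rintro ⟨h1, h2⟩
    by_contra hi
    have hsub : s ⊆ Finset.Icc 1 (i - 1) := fun j hj => by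
      have hj' := Finset.mem_Icc.mp (hs hj)
      rw [Finset.mem_Icc]
      refine ⟨hj'.1, ?_⟩
      by_contra hc
      exact hi (dc i j h1 (by omega) hj)
    have := Finset.card_le_card hsub
    simp only [Nat.card_Icc] at this
    omega

lemma chain_rel {α : Type*} (R : α → α → Prop) (htrans : Transitive R) (f : ℕ → α)
    (u v : ℕ) (h : u < v)
    (step : ∀ i, u < i → i ≤ v → R (f (i - 1)) (f i)) : R (f u) (f v) := by
  induction v with
  | zero => omega
  | succ v ih =>
    have hstep := step (v + 1) (by omega) le_rfl
    simp only [Nat.add_sub_cancel] at hstep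
    rcases Nat.lt_or_ge u v with h' | h'
    · exact htrans (ih h' (fun i hi1 hi2 => step i hi1 (by omega))) hstep
    · have : u = v := by omega
      subst this
      exact hstep

/-- `blkIdx x a v` is the block index `k ∈ [1,a]` with `x (k-1) ≤ v < x k`. -/
def blkIdx (x : ℕ → ℕ) (a v : ℕ) : ℕ := 1 + ((Finset.Icc 1 a).filter fun k => x k ≤ v).card

lemma blkIdx_spec (x : ℕ → ℕ) (a v : ℕ) (hmono : ∀ i j, i ≤ j → x i ≤ x j)
    (hx0 : x 0 = 0) (ha : 1 ≤ a) (hva : v < x a) :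
    1 ≤ blkIdx x a v ∧ blkIdx x a v ≤ a ∧ x (blkIdx x a v - 1) ≤ v ∧ v < x (blkIdx x a v) := by
  have hsub : ((Finset.Icc 1 a).filter fun k => x k ≤ v) ⊆ Finset.Icc 1 a :=
    Finset.filter_subset _ _
  have hdc : ∀ i j, 1 ≤ i → i ≤ j → j ∈ ((Finset.Icc 1 a).filter fun k => x k ≤ v) →
      i ∈ ((Finset.Icc 1 a).filter fun k => x k ≤ v) := by
    intro i j h1 hij hj
    rw [Finset.mem_filter, Finset.mem_Icc] at hj ⊢
    exact ⟨⟨h1, le_trans hij hj.1.2⟩, le_trans (hmono i j hij) hj.2⟩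
  have heq := downClosed_eq_Icc _ hsub hdc
  have hmem := Finset.ext_iff.mp heq
  simp only [Finset.mem_Icc] at hmem
  have hcle : ((Finset.Icc 1 a).filter fun k => x k ≤ v).card ≤ a :=
    le_trans (Finset.card_le_card hsub) (by simp)
  have hana : a ∉ ((Finset.Icc 1 a).filter fun k => x k ≤ v) := by
    rw [Finset.mem_filter]
    rintro ⟨-, h⟩; omega
  have hclt : ((Finset.Icc 1 a).filter fun k => x k ≤ v).card < a := by
    rcases Nat.lt_or_ge ((Finset.Icc 1 a).filter fun k => x k ≤ v).card a with h | h
    · exact h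
    · exfalso; apply hana; rw [hmem]; omega
  have hb : blkIdx x a v = 1 + ((Finset.Icc 1 a).filter fun k => x k ≤ v).card := rfl
  refine ⟨by omega, by omega, ?_, ?_⟩
  · rw [hb]
    simp only [Nat.add_sub_cancel_left]
    rcases Nat.eq_zero_or_pos ((Finset.Icc 1 a).filter fun k => x k ≤ v).card with h | h
    · rw [h, hx0]; omega
    · have hm : ((Finset.Icc 1 a).filter fun k => x k ≤ v).card ∈
          ((Finset.Icc 1 a).filter fun k => x k ≤ v) := by
        rw [hmem]; omega
      rw [Finset.mem_filter] at hm
      exact hm.2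
  · rw [hb, Nat.add_comm]
    have h2 : ((Finset.Icc 1 a).filter fun k => x k ≤ v).card + 1 ∉
        ((Finset.Icc 1 a).filter fun k => x k ≤ v) := by
      rw [hmem]; omega
    rw [Finset.mem_filter, Finset.mem_Icc] at h2
    push_neg at h2
    exact h2 ⟨by omega, by omega⟩


lemma swap_val {n : ℕ} (c : ℕ) (hc : c < n) (x : Fin (n + 1)) :
    ((Equiv.swap (⟨c, by omega⟩ : Fin (n + 1)) ⟨c + 1, by omega⟩) x : ℕ) =
      if (x : ℕ) = c then c + 1 else if (x : ℕ) = c + 1 then c else x := by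
  rcases eq_or_ne x ⟨c, by omega⟩ with h | h
  · subst h; simp
  · rcases eq_or_ne x ⟨c + 1, by omega⟩ with h2 | h2
    · subst h2; simp
    · rw [Equiv.swap_apply_of_ne_of_ne h h2]
      have hx1 : (x : ℕ) ≠ c := fun hx => h (Fin.ext hx)
      have hx2 : (x : ℕ) ≠ c + 1 := fun hx => h2 (Fin.ext hx)
      simp [hx1, hx2]

lemma lenInv_swap_lt {n : ℕ} (w : Equiv.Perm (Fin (n + 1))) (c : ℕ) (hc : c < n)
    (h : ((w.symm ⟨c + 1, by omega⟩ : Fin (n + 1)) : ℕ) < (w.symm ⟨c, by omega⟩ : Fin (n + 1))) :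
    lenInv (Equiv.swap (⟨c, by omega⟩ : Fin (n + 1)) ⟨c + 1, by omega⟩ * w) < lenInv w := by
  set s : Equiv.Perm (Fin (n + 1)) := Equiv.swap ⟨c, by omega⟩ ⟨c + 1, by omega⟩ with hs
  set q : Fin (n + 1) × Fin (n + 1) := (w.symm ⟨c + 1, by omega⟩, w.symm ⟨c, by omega⟩) with hq
  have hwq1 : w q.1 = ⟨c + 1, by omega⟩ := w.apply_symm_apply _
  have hwq2 : w q.2 = ⟨c, by omega⟩ := w.apply_symm_apply _
  have hqmem : q ∈ (Finset.univ.filter fun p : Fin (n + 1) × Fin (n + 1) =>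
      p.1 < p.2 ∧ w p.2 < w p.1) := by
    simp only [Finset.mem_filter, Finset.mem_univ, true_and]
    refine ⟨Fin.lt_def.mpr h, ?_⟩
    rw [hwq1, hwq2]
    exact Fin.mk_lt_mk.mpr (by omega)
  have hsubset : (Finset.univ.filter fun pr : Fin (n + 1) × Fin (n + 1) =>
        pr.1 < pr.2 ∧ (s * w) pr.2 < (s * w) pr.1)
      ⊆ (Finset.univ.filter fun pr : Fin (n + 1) × Fin (n + 1) =>
        pr.1 < pr.2 ∧ w pr.2 < w pr.1).erase q := by
    rintro ⟨p1, p2⟩ hpr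
    rw [Finset.mem_filter] at hpr
    simp only [Finset.mem_filter, Finset.mem_univ, true_and, Equiv.Perm.mul_apply] at hpr
    obtain ⟨hlt, hswap⟩ := hpr
    rw [Fin.lt_def] at hswap
    rw [hs, swap_val c hc (w p1), swap_val c hc (w p2)] at hswap
    have hE : ¬((w p1 : ℕ) = c ∧ (w p2 : ℕ) = c + 1) := by
      rintro ⟨h1, h2⟩
      have e1 : w.symm ⟨c, by omega⟩ = p1 := w.symm_apply_eq.mpr (Fin.ext h1).symm
      have e2 : w.symm ⟨c + 1, by omega⟩ = p2 := w.symm_apply_eq.mpr (Fin.ext h2).symm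
      rw [e1, e2] at h
      rw [Fin.lt_def] at hlt
      omega
    have hE' : (w p1 : ℕ) ≠ c ∨ (w p2 : ℕ) ≠ c + 1 := by tauto
    have hYX : (w p2 : ℕ) < (w p1 : ℕ) := by
      rcases hE' with hE2 | hE2 <;> (split_ifs at hswap <;> omega)
    rw [Finset.mem_erase, Finset.mem_filter]
    refine ⟨?_, Finset.mem_univ _, hlt, Fin.lt_def.mpr hYX⟩
    intro heq
    have e1 : p1 = q.1 := congrArg Prod.fst heq
    have e2 : p2 = q.2 := congrArg Prod.snd heq
    rw [e1, e2, hwq1, hwq2] at hswap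
    simp only [Fin.val_mk] at hswap
    split_ifs at hswap <;> omega
  have h1 := Finset.card_le_card hsubset
  rw [Finset.card_erase_of_mem hqmem] at h1
  have h2 : 0 < (Finset.univ.filter fun pr : Fin (n + 1) × Fin (n + 1) =>
      pr.1 < pr.2 ∧ w pr.2 < w pr.1).card := Finset.card_pos.mpr ⟨q, hqmem⟩
  unfold lenInv
  omega

lemma card_fin_Ico (n lo hi : ℕ) (hhi : hi ≤ n) :
    (Finset.univ.filter fun u : Fin n => lo ≤ (u : ℕ) ∧ (u : ℕ) < hi).card = hi - lo := by
  rw [← Nat.card_Ico lo hi]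
  refine Finset.card_bij (fun u _ => (u : ℕ)) ?_ ?_ ?_
  · intro u hu
    simp only [Finset.mem_filter] at hu
    rw [Finset.mem_Ico]
    exact hu.2
  · intro u _ v _ hv
    exact Fin.ext hv
  · intro x hx
    rw [Finset.mem_Ico] at hx
    refine ⟨⟨x, by omega⟩, ?_, rfl⟩
    simp only [Finset.mem_filter, Finset.mem_univ, true_and]
    exact ⟨hx.1, hx.2⟩

lemma card_fin_lt (n c : ℕ) (hc : c ≤ n) :
    (Finset.univ.filter fun u : Fin n => (u : ℕ) < c).card = c := by
  have := card_fin_Ico n 0 c hc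
  simp only [Nat.zero_le, true_and, Nat.sub_zero] at this
  exact this

lemma transp_le (b : ℕ) (t : ℕ → ℕ) (k : ℕ) : transp b t k ≤ b :=
  le_trans (Finset.card_le_card (Finset.filter_subset _ _)) (by simp)

lemma transp_filter_eq (b : ℕ) (t : ℕ → ℕ)
    (htmono : ∀ i j, 1 ≤ i → i ≤ j → j ≤ b → t j ≤ t i) (k : ℕ) :
    ((Finset.Icc 1 b).filter fun i => k ≤ t i) = Finset.Icc 1 (transp b t k) :=
  downClosed_eq_Icc _ (Finset.filter_subset _ _) (by
    intro i j h1 hij hj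
    rw [Finset.mem_filter, Finset.mem_Icc] at hj ⊢
    exact ⟨⟨h1, le_trans hij hj.1.2⟩, le_trans hj.2 (htmono i j h1 hij hj.1.2)⟩)

lemma card_filter_min (b L k : ℕ) (t : ℕ → ℕ)
    (htmono : ∀ i j, 1 ≤ i → i ≤ j → j ≤ b → t j ≤ t i) :
    ((Finset.Icc 1 (min L b)).filter fun i => k ≤ t i).card = min L (transp b t k) := by
  have heq : ((Finset.Icc 1 (min L b)).filter fun i => k ≤ t i)
      = Finset.Icc 1 (min L (transp b t k)) := by
    ext i
    have hm := Finset.ext_iff.mp (transp_filter_eq b t htmono k) i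
    have hle := transp_le b t k
    simp only [Finset.mem_filter, Finset.mem_Icc] at hm ⊢
    constructor
    · rintro ⟨⟨h1, h2⟩, h3⟩
      have := hm.mp ⟨⟨h1, by omega⟩, h3⟩
      omega
    · rintro ⟨h1, h2⟩
      have := hm.mpr ⟨h1, by omega⟩
      exact ⟨⟨h1, by omega⟩, this.2⟩
  rw [heq]
  simp

lemma sum_min_transp (b L : ℕ) (t : ℕ → ℕ)
    (htmono : ∀ i j, 1 ≤ i → i ≤ j → j ≤ b → t j ≤ t i) :
    ∑ k ∈ Finset.Icc 1 (t 1), min L (transp b t k) = psum t (min L b) := by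
  have hstep : ∀ k ∈ Finset.Icc 1 (t 1), min L (transp b t k)
      = ∑ i ∈ Finset.Icc 1 (min L b), if k ≤ t i then 1 else 0 := by
    intro k hk
    rw [← card_filter_min b L k t htmono, Finset.card_filter]
  rw [Finset.sum_congr rfl hstep, Finset.sum_comm]
  unfold psum
  apply Finset.sum_congr rfl
  intro i hi
  rw [Finset.mem_Icc] at hi
  rw [← Finset.card_filter]
  have hti : t i ≤ t 1 := by
    rcases Nat.eq_or_lt_of_le hi.1 with h | h
    · rw [← h]
    · exact htmono 1 i le_rfl hi.1 (by omega)
  have heq2 : (Finset.Icc 1 (t 1)).filter (fun k => k ≤ t i) = Finset.Icc 1 (t i) := by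
    ext k
    simp only [Finset.mem_filter, Finset.mem_Icc]
    omega
  rw [heq2]
  simp

lemma finOf_eq (r i : ℕ) (h : i ≤ r) : finOf r i = ⟨i, by omega⟩ := by
  apply Fin.ext
  simp [finOf, min_eq_left h]

lemma finOf_self (r : ℕ) (v : Fin (r + 1)) : finOf r (v : ℕ) = v := by
  apply Fin.ext
  have := v.isLt
  simp only [finOf]
  omega

/-- Theorem 3.1(1): if `p_1 + ⋯ + p_l > t_1 + ⋯ + t_l` for some `l`,
then every minimal-length coset representative `w` of `W(P_{μ^⊤})\W(G)` sends some
`α ∈ Δ_λ` to a positive root. -/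
theorem stmt16 (r b m : ℕ) (hr : 1 ≤ r) (hb : 1 ≤ b) (hm : 1 ≤ m) (t p : ℕ → ℕ)
    (htpos : ∀ i, 1 ≤ i → i ≤ b → 1 ≤ t i)
    (htmono : ∀ i j, 1 ≤ i → i ≤ j → j ≤ b → t j ≤ t i)
    (htzero : ∀ i, b < i → t i = 0)
    (htsum : psum t b = r + 1)
    (hppos : ∀ j, 1 ≤ j → j ≤ m → 1 ≤ p j)
    (hpsum : psum p m = r + 1)
    (l : ℕ) (hl1 : 1 ≤ l) (hl2 : l ≤ m) (hgt : psum t l < psum p l)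
    (w : Equiv.Perm (Fin (r + 1)))
    (hmin : ∀ u ∈ WP r (t 1) (transp b t), lenInv w ≤ lenInv (u * w)) :
    ∃ i, inDelta r m p i ∧ posRoot r w i := by
  by_contra hcon
  push_neg at hcon
  have ha : 1 ≤ t 1 := le_trans (htpos b hb le_rfl) (htmono 1 b le_rfl hb le_rfl)
  have hxa : psum (transp b t) (t 1) = r + 1 := by
    have h1 : ∀ k ∈ Finset.Icc 1 (t 1), transp b t k = min b (transp b t k) := fun k _ =>
      (min_eq_right (transp_le b t k)).symm
    have h2 := sum_min_transp b b t htmono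
    rw [min_self] at h2
    calc psum (transp b t) (t 1) = ∑ k ∈ Finset.Icc 1 (t 1), transp b t k := rfl
    _ = ∑ k ∈ Finset.Icc 1 (t 1), min b (transp b t k) := Finset.sum_congr rfl h1
    _ = psum t b := h2
    _ = r + 1 := htsum
  -- minimality of w: w⁻¹ is increasing across every non-cut of μ^⊤
  have hWinc : ∀ (c : ℕ) (hcr : c < r),
      (∀ j, 1 ≤ j → j ≤ t 1 - 1 → c + 1 ≠ psum (transp b t) j) →
      ((w.symm ⟨c, by omega⟩ : Fin (r + 1)) : ℕ) <
        ((w.symm ⟨c + 1, by omega⟩ : Fin (r + 1)) : ℕ) := by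
    intro c hcr hcut
    have hmem : sr r (c + 1) ∈ WP r (t 1) (transp b t) :=
      Subgroup.subset_closure ⟨c + 1, by omega, by omega, hcut, rfl⟩
    have hlen := hmin _ hmem
    have hsr : sr r (c + 1) = Equiv.swap (⟨c, by omega⟩ : Fin (r + 1)) ⟨c + 1, by omega⟩ := by
      have hcc : 1 ≤ c + 1 ∧ c + 1 ≤ r := ⟨by omega, by omega⟩
      simp only [sr, dif_pos hcc]
      congr 1
    rw [hsr] at hlen
    by_contra hc2
    push_neg at hc2
    have hne : ((w.symm ⟨c + 1, by omega⟩ : Fin (r + 1)) : ℕ) ≠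
        ((w.symm ⟨c, by omega⟩ : Fin (r + 1)) : ℕ) := by
      intro h
      have h2 := w.symm.injective (Fin.ext h)
      rw [Fin.mk.injEq] at h2
      omega
    have := lenInv_swap_lt w c hcr (by omega)
    omega
  -- if w u and w v lie in the same μ^⊤ block and u < v, then w u < w v
  have hblock : ∀ (u v : Fin (r + 1)) (k : ℕ), 1 ≤ k → k ≤ t 1 →
      psum (transp b t) (k - 1) ≤ (w u : ℕ) → (w u : ℕ) < psum (transp b t) k →
      psum (transp b t) (k - 1) ≤ (w v : ℕ) → (w v : ℕ) < psum (transp b t) k →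
      u < v → (w u : ℕ) < (w v : ℕ) := by
    intro u v k hk1 hk2 hu1 hu2 hv1 hv2 huv
    rcases lt_trichotomy ((w u : ℕ)) ((w v : ℕ)) with h | h | h
    · exact h
    · exact absurd (w.injective (Fin.ext h)) (Fin.ne_of_lt huv)
    · exfalso
      have hchain := chain_rel (fun x y : ℕ => x < y) (fun _ _ _ h1 h2 => lt_trans h1 h2)
        (fun i => ((w.symm (finOf r i)) : ℕ)) (w v : ℕ) (w u : ℕ) h ?_
      · have hchain' : ((w.symm (finOf r (w v : ℕ))) : ℕ) <
            ((w.symm (finOf r (w u : ℕ))) : ℕ) := hchain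
        rw [finOf_self, finOf_self, Equiv.symm_apply_apply, Equiv.symm_apply_apply] at hchain'
        rw [Fin.lt_def] at huv
        omega
      · intro i hi1 hi2
        obtain ⟨c, rfl⟩ : ∃ c, i = c + 1 := ⟨i - 1, by omega⟩
        have hwur : (w u : ℕ) ≤ r := by have := (w u).isLt; omega
        have hcr : c < r := by omega
        show ((w.symm (finOf r c)) : ℕ) < ((w.symm (finOf r (c + 1))) : ℕ)
        rw [finOf_eq r c (by omega), finOf_eq r (c + 1) (by omega)]
        apply hWinc c hcr
        intro j hj1 hj2 hne
        rcases Nat.lt_or_ge j k with hjk | hjk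
        · have := psum_mono (transp b t) (show j ≤ k - 1 by omega)
          omega
        · have := psum_mono (transp b t) hjk
          omega
  -- if u < v lie in the same λ block, then w v < w u
  have hlam : ∀ (u v : Fin (r + 1)) (j : ℕ), 1 ≤ j → j ≤ m →
      psum p (j - 1) ≤ (u : ℕ) → ((v : ℕ)) < psum p j → u < v →
      (w v : ℕ) < (w u : ℕ) := by
    intro u v j hj1 hj2 hu1 hv2 huv
    have huvn : (u : ℕ) < (v : ℕ) := Fin.lt_def.mp huv
    have hchain := chain_rel (fun x y : ℕ => y < x) (fun _ _ _ h1 h2 => lt_trans h2 h1)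
      (fun i => ((w (finOf r i)) : ℕ)) (u : ℕ) (v : ℕ) huvn ?_
    · have hchain' : ((w (finOf r (v : ℕ))) : ℕ) < ((w (finOf r (u : ℕ))) : ℕ) := hchain
      rw [finOf_self, finOf_self] at hchain'
      exact hchain'
    · intro i hi1 hi2
      show ((w (finOf r i)) : ℕ) < ((w (finOf r (i - 1))) : ℕ)
      have hvr : (v : ℕ) ≤ r := by have := v.isLt; omega
      have hiD : inDelta r m p i := by
        refine ⟨by omega, by omega, ?_⟩
        intro j' hj'1 hj'2 hne
        rcases Nat.lt_or_ge j' j with hjj | hjj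
        · have := psum_mono p (show j' ≤ j - 1 by omega)
          omega
        · have := psum_mono p hjj
          omega
      have hnp := hcon i hiD
      rw [posRoot] at hnp
      push_neg at hnp
      have hne2 : finOf r (i - 1) ≠ finOf r i := by
        intro h
        have := congrArg Fin.val h
        simp only [finOf] at this
        omega
      have : (w (finOf r i) : ℕ) ≠ (w (finOf r (i - 1)) : ℕ) := by
        intro h
        exact hne2 (w.injective (Fin.ext h)).symm
      omega
  -- the counting argument
  have hylr : psum p l ≤ r + 1 := by rw [← hpsum]; exact psum_mono p hl2
  have hS : (Finset.univ.filter fun u : Fin (r + 1) => (u : ℕ) < psum p l).card = psum p l :=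
    card_fin_lt _ _ hylr
  have hxmono : ∀ (i j : ℕ), i ≤ j → psum (transp b t) i ≤ psum (transp b t) j :=
    fun i j h => psum_mono _ h
  have hx0 : psum (transp b t) 0 = 0 := psum_zero _
  have hspec : ∀ u : Fin (r + 1),
      1 ≤ blkIdx (psum (transp b t)) (t 1) (w u : ℕ) ∧
      blkIdx (psum (transp b t)) (t 1) (w u : ℕ) ≤ t 1 ∧
      psum (transp b t) (blkIdx (psum (transp b t)) (t 1) (w u : ℕ) - 1) ≤ (w u : ℕ) ∧
      (w u : ℕ) < psum (transp b t) (blkIdx (psum (transp b t)) (t 1) (w u : ℕ)) := by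
    intro u
    exact blkIdx_spec _ _ _ hxmono hx0 ha (by rw [hxa]; exact (w u).isLt)
  have hfib : ∀ u ∈ (Finset.univ.filter fun u : Fin (r + 1) => (u : ℕ) < psum p l),
      blkIdx (psum (transp b t)) (t 1) (w u : ℕ) ∈ Finset.Icc 1 (t 1) := by
    intro u _
    rw [Finset.mem_Icc]
    exact ⟨(hspec u).1, (hspec u).2.1⟩
  have hcount := Finset.card_eq_sum_card_fiberwise hfib
  have hpspec : ∀ u : Fin (r + 1),
      1 ≤ blkIdx (psum p) m (u : ℕ) ∧ blkIdx (psum p) m (u : ℕ) ≤ m ∧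
      psum p (blkIdx (psum p) m (u : ℕ) - 1) ≤ (u : ℕ) ∧
      (u : ℕ) < psum p (blkIdx (psum p) m (u : ℕ)) := by
    intro u
    exact blkIdx_spec _ _ _ (fun i j h => psum_mono _ h) (psum_zero _) hm
      (by rw [hpsum]; exact u.isLt)
  have hbound : ∀ k ∈ Finset.Icc 1 (t 1),
      ((Finset.univ.filter fun u : Fin (r + 1) => (u : ℕ) < psum p l).filter
        fun u => blkIdx (psum (transp b t)) (t 1) (w u : ℕ) = k).card
        ≤ min l (transp b t k) := by
    intro k hk
    rw [Finset.mem_Icc] at hk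
    apply le_min
    · -- at most l elements : inject into Icc 1 l via the λ-block index
      have hmaps : ∀ u ∈ ((Finset.univ.filter fun u : Fin (r + 1) => (u : ℕ) < psum p l).filter
          fun u => blkIdx (psum (transp b t)) (t 1) (w u : ℕ) = k),
          blkIdx (psum p) m (u : ℕ) ∈ Finset.Icc 1 l := by
        intro u hu
        simp only [Finset.mem_filter, Finset.mem_univ, true_and] at hu
        obtain ⟨hs1, hs2, hs3, hs4⟩ := hpspec u
        rw [Finset.mem_Icc]
        refine ⟨hs1, ?_⟩
        by_contra hgl
        push_neg at hgl
        have := psum_mono p (show l ≤ blkIdx (psum p) m (u : ℕ) - 1 by omega)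
        omega
      have hinj : Set.InjOn (fun u : Fin (r + 1) => blkIdx (psum p) m (u : ℕ))
          ↑((Finset.univ.filter fun u : Fin (r + 1) => (u : ℕ) < psum p l).filter
            fun u => blkIdx (psum (transp b t)) (t 1) (w u : ℕ) = k) := by
        intro u hu v hv hj
        simp only [Finset.coe_filter, Set.mem_setOf_eq, Finset.mem_filter, Finset.mem_univ,
          true_and] at hu hv
        simp only at hj
        by_contra hne
        obtain ⟨hs1, hs2, hs3, hs4⟩ := hpspec u
        obtain ⟨ht1', ht2', ht3', ht4'⟩ := hpspec v
        rw [hj] at hs3 hs4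
        obtain ⟨hb1, hb2, hb3, hb4⟩ := hspec u
        obtain ⟨hc1, hc2, hc3, hc4⟩ := hspec v
        rw [hu.2] at hb3 hb4
        rw [hv.2] at hc3 hc4
        rcases lt_trichotomy u v with huv | huv | huv
        · have h1 := hlam u v (blkIdx (psum p) m (v : ℕ)) ht1' ht2' hs3 ht4' huv
          have h2 := hblock u v k hk.1 hk.2 hb3 hb4 hc3 hc4 huv
          omega
        · exact hne huv
        · have h1 := hlam v u (blkIdx (psum p) m (v : ℕ)) ht1' ht2' ht3' hs4 huv
          have h2 := hblock v u k hk.1 hk.2 hc3 hc4 hb3 hb4 huv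
          omega
      have := Finset.card_le_card_of_injOn _ hmaps hinj
      simpa using this
    · -- at most (transp b t k) elements : inject into the k-th value window via w
      have hmaps2 : ∀ u ∈ ((Finset.univ.filter fun u : Fin (r + 1) => (u : ℕ) < psum p l).filter
          fun u => blkIdx (psum (transp b t)) (t 1) (w u : ℕ) = k),
          w u ∈ (Finset.univ.filter fun v : Fin (r + 1) =>
            psum (transp b t) (k - 1) ≤ (v : ℕ) ∧ (v : ℕ) < psum (transp b t) k) := by
        intro u hu
        simp only [Finset.mem_filter, Finset.mem_univ, true_and] at hu ⊢
        obtain ⟨hb1, hb2, hb3, hb4⟩ := hspec u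
        rw [hu.2] at hb3 hb4
        exact ⟨hb3, hb4⟩
      have hle := Finset.card_le_card_of_injOn _ hmaps2 (w.injective.injOn)
      have hwin : (Finset.univ.filter fun v : Fin (r + 1) =>
          psum (transp b t) (k - 1) ≤ (v : ℕ) ∧ (v : ℕ) < psum (transp b t) k).card
          = psum (transp b t) k - psum (transp b t) (k - 1) :=
        card_fin_Ico _ _ _ (by rw [← hxa]; exact psum_mono _ hk.2)
      have hstep := psum_succ (transp b t) hk.1
      omega
  have hfinal : psum p l ≤ psum t l := by
    have h1 : psum p l ≤ ∑ k ∈ Finset.Icc 1 (t 1), min l (transp b t k) := by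
      rw [← hS, hcount]
      exact Finset.sum_le_sum hbound
    have h2 := sum_min_transp b l t htmono
    have h3 := psum_mono t (min_le_left l b)
    omega
  omega
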